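/- Trivial-syndrome case of the proof of Theorem 2: let m ≥ 5. For every fault pattern F with w(F) ≤ 2 whose observed syndrome is zero (s(F) = 0), the data error satisfies wt(e(F)) ≤ w(F); hence applying no correction is safe when no cat stabilizer is triggered. -/
import Mathlib


open scoped Classical

namespace CutCat

/-- A fault in the cut-cat single-round fault model, located at cat qubit `r`. -/
inductive Fault (m : ℕ) where
  | pre  (r : ZMod m)
  | mid  (r : ZMod m)
  | post (r : ZMod m)
  | meas (r : ZMod m)

variable {m : ℕ}

/-- The index (in `ZMod (2*m)`) of the data qubit `2r` coupled to cat qubit `r`. -/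
def d0 (r : ZMod m) : ZMod (2 * m) := 2 * (r.val : ZMod (2 * m))

/-- The data-qubit error contributed by a single fault. -/
def Fault.dataErr : Fault m → ZMod (2 * m) → ZMod 2
  | .pre r  => fun q => (if q = d0 r then 1 else 0) + (if q = d0 r + 1 then 1 else 0)
  | .mid r  => fun q => if q = d0 r + 1 then 1 else 0
  | .post _ => 0
  | .meas _ => 0

/-- The cat-stabilizer syndrome contribution of a single fault
    (syndrome bit `j` checks cat qubits `j` and `j+1`). -/
def Fault.syn : Fault m → ZMod m → ZMod 2
  | .pre r  => fun j => (if j = r - 1 then 1 else 0) + (if j = r then 1 else 0)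
  | .mid r  => fun j => (if j = r - 1 then 1 else 0) + (if j = r then 1 else 0)
  | .post r => fun j => (if j = r - 1 then 1 else 0) + (if j = r then 1 else 0)
  | .meas r => fun j => if j = r then 1 else 0

/-- The data error `e(F)` of a fault pattern `F` (coordinatewise mod-2 sum). -/
def dataErr (F : Multiset (Fault m)) : ZMod (2 * m) → ZMod 2 :=
  (F.map Fault.dataErr).sum

/-- The observed syndrome `s(F)` of a fault pattern `F` (coordinatewise mod-2 sum). -/
def synd (F : Multiset (Fault m)) : ZMod m → ZMod 2 :=
  (F.map Fault.syn).sum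

/-- Hamming weight of a binary vector. -/
noncomputable def wt {n : ℕ} (f : ZMod n → ZMod 2) : ℕ := {i | f i ≠ 0}.ncard

/-- The set of triggered syndrome bits, `supp s(F)`. -/
def suppSyn (F : Multiset (Fault m)) : Set (ZMod m) := {j | synd F j = 1}

/-- Boundary of a set of cat qubits: checks `j` with exactly one of `j`, `j+1` in `E`. -/
def boundary (E : Set (ZMod m)) : Set (ZMod m) := {j | Xor' (j ∈ E) (j + 1 ∈ E)}

/-- Indicator (as a binary data vector) of the set `{2r+1 : r ∈ E}`. -/
noncomputable def indicOdd (E : Set (ZMod m)) : ZMod (2 * m) → ZMod 2 :=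
  fun q => if ∃ r ∈ E, q = d0 r + 1 then 1 else 0

/-- Indicator of a single data position `j`. -/
def indic {n : ℕ} (j : ZMod n) : ZMod n → ZMod 2 := fun q => if q = j then 1 else 0

/-- `c` is the correction output by the minimum-weight decoder with parameter `t`
    on syndrome `s(F)`: if there is a set `E` of at most `t` cat qubits whose
    boundary equals `supp s(F)`, then `c` is the indicator of `{2r+1 : r ∈ E}`;
    otherwise `c = 0`. -/
def IsDecoderCorrection (t : ℕ) (F : Multiset (Fault m)) (c : ZMod (2 * m) → ZMod 2) : Prop :=
  (∃ E : Set (ZMod m), E.ncard ≤ t ∧ boundary E = suppSyn F ∧ c = indicOdd E) ∨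
  ((¬ ∃ E : Set (ZMod m), E.ncard ≤ t ∧ boundary E = suppSyn F) ∧ c = 0)

/-- `true` iff the fault is a measurement fault. -/
def Fault.isMeas : Fault m → Bool
  | .meas _ => true
  | _ => false

end CutCat


namespace CutCatAux

open CutCat

variable {m : ℕ}

lemma two_ne (hm : 5 ≤ m) : (2 : ZMod m) ≠ 0 := by
  haveI : NeZero m := ⟨by omega⟩
  intro h
  have h2 : ((2 : ℕ) : ZMod m) = 0 := by exact_mod_cast h
  have := (ZMod.natCast_eq_zero_iff 2 m).mp h2
  have := Nat.le_of_dvd (by norm_num) this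
  omega

lemma one_ne (hm : 5 ≤ m) : (1 : ZMod m) ≠ 0 := by
  haveI : Fact (1 < m) := ⟨by omega⟩
  exact one_ne_zero

lemma self_ne_sub_one (hm : 5 ≤ m) (r : ZMod m) : r ≠ r - 1 := by
  intro h
  exact one_ne hm (sub_eq_self.mp h.symm)

/-- Two non-measurement faults with cancelling syndromes sit at the same cat qubit. -/
lemma synA (hm : 5 ≤ m) (r r' : ZMod m)
    (h : ∀ j : ZMod m,
      (((if j = r - 1 then 1 else 0) + (if j = r then 1 else 0) : ZMod 2)
        + ((if j = r' - 1 then 1 else 0) + (if j = r' then 1 else 0))) = 0) :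
    r = r' := by
  by_contra hne
  have e1 := h r'
  have hr'r : r' ≠ r := Ne.symm hne
  have hr' : r' ≠ r' - 1 := self_ne_sub_one hm r'
  simp only [hr'r, hr', if_false, if_pos rfl] at e1
  have hc1 : r' = r - 1 := by
    by_contra hc
    simp [hc] at e1
  subst hc1
  have e2 := h (r - 1 - 1)
  have k1 : r - 1 - 1 ≠ r - 1 := (self_ne_sub_one hm (r - 1)).symm
  have k2 : r - 1 - 1 ≠ r := by
    intro hk
    exact two_ne hm (by linear_combination -hk)
  simp [k1, k2] at e2

/-- A measurement fault's syndrome cannot cancel a non-measurement fault's syndrome. -/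
lemma synB (hm : 5 ≤ m) (r r' : ZMod m)
    (h : ∀ j : ZMod m,
      ((if j = r then 1 else 0 : ZMod 2)
        + ((if j = r' - 1 then 1 else 0) + (if j = r' then 1 else 0))) = 0) :
    False := by
  have e1 := h r'
  have hr' : r' ≠ r' - 1 := self_ne_sub_one hm r'
  simp only [hr', if_false, if_pos rfl] at e1
  have hc1 : r' = r := by
    by_contra hc
    simp [hc] at e1
  subst hc1
  have e2 := h (r' - 1)
  have k1 : r' - 1 ≠ r' := Ne.symm (self_ne_sub_one hm r')
  simp [k1] at e2

lemma synC (hm : 5 ≤ m) (r : ZMod m)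
    (h : ∀ j : ZMod m,
      ((if j = r - 1 then 1 else 0) + (if j = r then 1 else 0) : ZMod 2) = 0) :
    False := by
  have e := h r
  have : r ≠ r - 1 := self_ne_sub_one hm r
  simp [this] at e

lemma synCm (r : ZMod m) (h : ∀ j : ZMod m, (if j = r then 1 else 0 : ZMod 2) = 0) :
    False := by
  have e := h r
  simp at e

lemma wt_le_two {n : ℕ} (a b : ZMod n) (f : ZMod n → ZMod 2)
    (h : ∀ q, f q ≠ 0 → q = a ∨ q = b) : wt f ≤ 2 := by
  have hsub : {i | f i ≠ 0} ⊆ ({a, b} : Set (ZMod n)) := by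
    intro q hq
    rcases h q hq with h1 | h1 <;> simp [h1]
  have hfin : ({a, b} : Set (ZMod n)).Finite := (Set.finite_singleton b).insert a
  calc wt f = {i | f i ≠ 0}.ncard := rfl
    _ ≤ ({a, b} : Set (ZMod n)).ncard := Set.ncard_le_ncard hsub hfin
    _ ≤ ({b} : Set (ZMod n)).ncard + 1 := Set.ncard_insert_le a _
    _ ≤ 2 := by simp

lemma supp_pre (r : ZMod m) :
    ∀ q, (Fault.pre r).dataErr q ≠ 0 → q = d0 r ∨ q = d0 r + 1 := by
  intro q hq
  by_contra hc
  push_neg at hc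
  simp [Fault.dataErr, hc.1, hc.2] at hq

lemma supp_mid (r : ZMod m) :
    ∀ q, (Fault.mid r).dataErr q ≠ 0 → q = d0 r ∨ q = d0 r + 1 := by
  intro q hq
  by_contra hc
  push_neg at hc
  simp [Fault.dataErr, hc.2] at hq

lemma supp_post (r s : ZMod m) :
    ∀ q, (Fault.post s).dataErr q ≠ 0 → q = d0 r ∨ q = d0 r + 1 := by
  intro q hq
  simp [Fault.dataErr] at hq

lemma supp_meas (r s : ZMod m) :
    ∀ q, (Fault.meas s).dataErr q ≠ 0 → q = d0 r ∨ q = d0 r + 1 := by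
  intro q hq
  simp [Fault.dataErr] at hq

lemma data_bound (r : ZMod m) (f g : Fault m)
    (hf : ∀ q, f.dataErr q ≠ 0 → q = d0 r ∨ q = d0 r + 1)
    (hg : ∀ q, g.dataErr q ≠ 0 → q = d0 r ∨ q = d0 r + 1) :
    wt (f.dataErr + g.dataErr) ≤ 2 := by
  apply wt_le_two (d0 r) (d0 r + 1)
  intro q hq
  by_contra hc
  push_neg at hc
  have h1 : f.dataErr q = 0 := by
    by_contra h
    rcases hf q h with h' | h' <;> [exact hc.1 h'; exact hc.2 h']
  have h2 : g.dataErr q = 0 := by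
    by_contra h
    rcases hg q h with h' | h' <;> [exact hc.1 h'; exact hc.2 h']
  exact hq (by simp [h1, h2])

end CutCatAux

/-- Trivial-syndrome case of the proof of Theorem 2: if `w(F) ≤ 2` and the
observed syndrome is zero, then `wt(e(F)) ≤ w(F)`, so no correction is needed. -/
theorem cutcat_d5_trivial_syndrome (m : ℕ) (hm : 5 ≤ m)
    (F : Multiset (CutCat.Fault m)) (hF : Multiset.card F ≤ 2)
    (hs : CutCat.synd F = 0) :
    CutCat.wt (CutCat.dataErr F) ≤ Multiset.card F := by
  rcases Nat.lt_or_ge (Multiset.card F) 1 with h0 | h1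
  · have hF0 : F = 0 := Multiset.card_eq_zero.mp (by omega)
    subst hF0
    have : CutCat.dataErr (0 : Multiset (CutCat.Fault m)) = fun _ => 0 := by
      funext q; simp [CutCat.dataErr]
    rw [this]
    have := CutCatAux.wt_le_two (0 : ZMod (2*m)) 0 (fun _ => (0 : ZMod 2))
      (fun q hq => absurd rfl hq)
    simpa [CutCat.wt] using Nat.zero_le _
  rcases Nat.lt_or_ge (Multiset.card F) 2 with h2 | h2
  · -- card = 1 : impossible, syndrome nonzero
    have hc1 : Multiset.card F = 1 := by omega
    obtain ⟨f, rfl⟩ := Multiset.card_eq_one.mp hc1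
    have hsyn : ∀ j, f.syn j = 0 := by
      intro j
      have := congrFun hs j
      simpa [CutCat.synd] using this
    exfalso
    cases f with
    | pre r => exact CutCatAux.synC hm r (fun j => by simpa [CutCat.Fault.syn] using hsyn j)
    | mid r => exact CutCatAux.synC hm r (fun j => by simpa [CutCat.Fault.syn] using hsyn j)
    | post r => exact CutCatAux.synC hm r (fun j => by simpa [CutCat.Fault.syn] using hsyn j)
    | meas r => exact CutCatAux.synCm r (fun j => by simpa [CutCat.Fault.syn] using hsyn j)
  · -- card = 2
    have hc2 : Multiset.card F = 2 := le_antisymm hF h2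
    obtain ⟨f, g, rfl⟩ := Multiset.card_eq_two.mp hc2
    have hsum : ∀ j, f.syn j + g.syn j = 0 := by
      intro j
      have := congrFun hs j
      simpa [CutCat.synd] using this
    have hde : CutCat.dataErr ({f, g} : Multiset (CutCat.Fault m))
        = f.dataErr + g.dataErr := by
      simp [CutCat.dataErr]
    rw [hc2, hde]
    cases f with
    | pre r =>
      cases g with
      | pre r' =>
        have hr := CutCatAux.synA hm r r' (fun j => by simpa [CutCat.Fault.syn] using hsum j)
        subst hr
        exact CutCatAux.data_bound r _ _ (CutCatAux.supp_pre r) (CutCatAux.supp_pre r)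
      | mid r' =>
        have hr := CutCatAux.synA hm r r' (fun j => by simpa [CutCat.Fault.syn] using hsum j)
        subst hr
        exact CutCatAux.data_bound r _ _ (CutCatAux.supp_pre r) (CutCatAux.supp_mid r)
      | post r' =>
        exact CutCatAux.data_bound r _ _ (CutCatAux.supp_pre r) (CutCatAux.supp_post r r')
      | meas r' =>
        exact CutCatAux.data_bound r _ _ (CutCatAux.supp_pre r) (CutCatAux.supp_meas r r')
    | mid r =>
      cases g with
      | pre r' =>
        have hr := CutCatAux.synA hm r r' (fun j => by simpa [CutCat.Fault.syn] using hsum j)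
        subst hr
        exact CutCatAux.data_bound r _ _ (CutCatAux.supp_mid r) (CutCatAux.supp_pre r)
      | mid r' =>
        have hr := CutCatAux.synA hm r r' (fun j => by simpa [CutCat.Fault.syn] using hsum j)
        subst hr
        exact CutCatAux.data_bound r _ _ (CutCatAux.supp_mid r) (CutCatAux.supp_mid r)
      | post r' =>
        exact CutCatAux.data_bound r _ _ (CutCatAux.supp_mid r) (CutCatAux.supp_post r r')
      | meas r' =>
        exact CutCatAux.data_bound r _ _ (CutCatAux.supp_mid r) (CutCatAux.supp_meas r r')
    | post r =>
      cases g with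
      | pre r' =>
        exact CutCatAux.data_bound r' _ _ (CutCatAux.supp_post r' r) (CutCatAux.supp_pre r')
      | mid r' =>
        exact CutCatAux.data_bound r' _ _ (CutCatAux.supp_post r' r) (CutCatAux.supp_mid r')
      | post r' =>
        exact CutCatAux.data_bound r _ _ (CutCatAux.supp_post r r) (CutCatAux.supp_post r r')
      | meas r' =>
        exact CutCatAux.data_bound r _ _ (CutCatAux.supp_post r r) (CutCatAux.supp_meas r r')
    | meas r =>
      cases g with
      | pre r' =>
        exact absurd (fun j => by
          have := hsum j
          simpa [CutCat.Fault.syn] using this) (CutCatAux.synB hm r r')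
      | mid r' =>
        exact absurd (fun j => by
          have := hsum j
          simpa [CutCat.Fault.syn] using this) (CutCatAux.synB hm r r')
      | post r' =>
        exact absurd (fun j => by
          have := hsum j
          simpa [CutCat.Fault.syn] using this) (CutCatAux.synB hm r r')
      | meas r' =>
        exact CutCatAux.data_bound r _ _ (CutCatAux.supp_meas r r) (CutCatAux.supp_meas r r')
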